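/- Every 1-absorbing primary ideal of a commutative ring R is a 2-absorbing primary ideal of R. -/

import Mathlib

def IsOneAbsorbingPrimary {R : Type*} [CommRing R] (I : Ideal R) : Prop :=
  I ≠ ⊤ ∧ ∀ a b c : R, ¬IsUnit a → ¬IsUnit b → ¬IsUnit c →
    a * b * c ∈ I → a * b ∈ I ∨ c ∈ I.radical

def IsTwoAbsorbingPrimary {R : Type*} [CommRing R] (I : Ideal R) : Prop :=
  I ≠ ⊤ ∧ ∀ a b c : R, a * b * c ∈ I →
    a * b ∈ I ∨ a * c ∈ I.radical ∨ b * c ∈ I.radical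

theorem twoAbsorbingPrimary_of_oneAbsorbingPrimary {R : Type*} [CommRing R] [Nontrivial R]
    (I : Ideal R) (hI : IsOneAbsorbingPrimary I) : IsTwoAbsorbingPrimary I := by
  obtain ⟨hne, h⟩ := hI
  refine ⟨hne, fun a b c habc => ?_⟩
  by_cases ha : IsUnit a
  · right; right
    apply Ideal.le_radical
    obtain ⟨u, rfl⟩ := ha
    have : (↑u⁻¹ : R) * (↑u * b * c) ∈ I := Ideal.mul_mem_left I _ habc
    rwa [show (↑u⁻¹ : R) * (↑u * b * c) = b * c by
      rw [mul_comm (↑u : R) b, mul_assoc b, ← mul_assoc (↑u⁻¹ : R), ← mul_assoc,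
        mul_comm (↑u⁻¹ : R) b, mul_assoc b, Units.inv_mul, mul_one]] at this
  by_cases hb : IsUnit b
  · right; left
    apply Ideal.le_radical
    obtain ⟨u, rfl⟩ := hb
    have : (↑u⁻¹ : R) * (a * ↑u * c) ∈ I := Ideal.mul_mem_left I _ habc
    rwa [show (↑u⁻¹ : R) * (a * ↑u * c) = a * c by
      rw [show a * ↑u * c = ↑u * (a * c) by ring, ← mul_assoc, Units.inv_mul, one_mul]] at this
  by_cases hc : IsUnit c
  · left
    obtain ⟨u, rfl⟩ := hc
    have : (a * b * ↑u) * (↑u⁻¹ : R) ∈ I := I.mul_mem_right _ habc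
    rwa [mul_assoc, Units.mul_inv, mul_one] at this
  rcases h a b c ha hb hc habc with h1 | h1
  · exact Or.inl h1
  · exact Or.inr (Or.inr (Ideal.mul_mem_left _ _ h1))
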